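/- Let columns C_1, C_2, ... be i.i.d. uniform on F_2^k and requests R_1, R_2, ... be i.i.d. uniform on the nonzero vectors of F_2^k, independent of the columns. Let L_n be the maximum number of requests among R_1, ..., R_n that can be served (as a sub-multiset) from columns C_1, ..., C_n by disjoint recovery sets. Then L_n / n → 1 − 2^{-k} almost surely. -/

import Mathlib

open MeasureTheory ProbabilityTheory Filter
open scoped ENNReal

/-- `L(G; R)`: the maximum number of requests among `R 0, …, R (n-1)` that can
be served from the column multiset `G` by pairwise disjoint recovery sets. -/
noncomputable def Lpar {k : ℕ} (G : Multiset (Fin k → ZMod 2)) {n : ℕ}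
    (R : Fin n → (Fin k → ZMod 2)) : ℕ :=
  sSup {m : ℕ | ∃ I : Finset (Fin n), I.card = m ∧
    ∃ S : Fin n → Multiset (Fin k → ZMod 2),
      (∑ i ∈ I, S i) ≤ G ∧ ∀ i ∈ I, (S i).sum = R i}

lemma Lpar_le_card_filter {k n : ℕ} (G : Multiset (Fin k → ZMod 2))
    (R : Fin n → (Fin k → ZMod 2)) (hR : ∀ i, R i ≠ 0) :
    Lpar G R ≤ (G.filter (fun x => x ≠ 0)).card := by
  have h0 : 0 ∈ {m : ℕ | ∃ I : Finset (Fin n), I.card = m ∧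
      ∃ S : Fin n → Multiset (Fin k → ZMod 2),
        (∑ i ∈ I, S i) ≤ G ∧ ∀ i ∈ I, (S i).sum = R i} :=
    ⟨∅, by simp, fun _ => 0, by simp, by simp⟩
  apply csSup_le ⟨0, h0⟩
  rintro m ⟨I, rfl, S, hle, hsum⟩
  have h1 : ∀ i ∈ I, 1 ≤ ((S i).filter (fun x => x ≠ 0)).card := by
    intro i hi
    rw [Nat.one_le_iff_ne_zero]
    intro hc
    rw [Multiset.card_eq_zero, Multiset.filter_eq_nil] at hc
    have : (S i).sum = 0 := Multiset.sum_eq_zero (fun x hx => not_not.mp (hc x hx))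
    exact hR i ((hsum i hi) ▸ this)
  calc I.card = ∑ _i ∈ I, 1 := by simp
    _ ≤ ∑ i ∈ I, ((S i).filter (fun x => x ≠ 0)).card := Finset.sum_le_sum h1
    _ = (Multiset.filter (fun x => x ≠ 0) (∑ i ∈ I, S i)).card := by
        have key : ∀ J : Finset (Fin n),
            ∑ i ∈ J, ((S i).filter (fun x => x ≠ 0)).card
              = (Multiset.filter (fun x => x ≠ 0) (∑ i ∈ J, S i)).card := by
          intro J
          induction J using Finset.induction_on with
          | empty => simp
          | insert _ _ h ih => simp [Finset.sum_insert h, Multiset.filter_add, ih]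
        exact key I
    _ ≤ (G.filter (fun x => x ≠ 0)).card :=
        Multiset.card_le_card (Multiset.filter_le_filter _ hle)

lemma le_Lpar {k n : ℕ} (G : Multiset (Fin k → ZMod 2))
    (R : Fin n → (Fin k → ZMod 2)) :
    ∑ v : (Fin k → ZMod 2),
      min ((Finset.univ.filter (fun i => R i = v)).card) (G.count v) ≤ Lpar G R := by
  classical
  have hmin : ∀ v : Fin k → ZMod 2,
      min ((Finset.univ.filter (fun i => R i = v)).card) (G.count v)
        ≤ (Finset.univ.filter (fun i => R i = v)).card := fun v => min_le_left _ _
  choose T hTsub hTcard using fun v => Finset.exists_subset_card_eq (hmin v)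
  set I : Finset (Fin n) := Finset.univ.biUnion T with hI
  have hdisj : ∀ u ∈ (Finset.univ : Finset (Fin k → ZMod 2)), ∀ v ∈ Finset.univ,
      u ≠ v → Disjoint (T u) (T v) := by
    intro u _ v _ huv
    rw [Finset.disjoint_left]
    intro i hiu hiv
    have h1 := (Finset.mem_filter.mp (hTsub u hiu)).2
    have h2 := (Finset.mem_filter.mp (hTsub v hiv)).2
    exact huv (h1 ▸ h2 ▸ rfl)
  have hcard : I.card = ∑ v : Fin k → ZMod 2,
      min ((Finset.univ.filter (fun i => R i = v)).card) (G.count v) := by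
    rw [hI, Finset.card_biUnion hdisj]
    exact Finset.sum_congr rfl (fun v _ => hTcard v)
  have hfil : ∀ v, I.filter (fun i => R i = v) = T v := by
    intro v
    ext i
    simp only [Finset.mem_filter, hI, Finset.mem_biUnion, Finset.mem_univ, true_and]
    constructor
    · rintro ⟨⟨u, hiu⟩, hv⟩
      have h2 := (Finset.mem_filter.mp (hTsub u hiu)).2
      obtain rfl : u = v := h2.symm.trans hv
      exact hiu
    · intro hiv
      exact ⟨⟨v, hiv⟩, (Finset.mem_filter.mp (hTsub v hiv)).2⟩
  have hmem : I.card ∈ {m : ℕ | ∃ I : Finset (Fin n), I.card = m ∧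
      ∃ S : Fin n → Multiset (Fin k → ZMod 2),
        (∑ i ∈ I, S i) ≤ G ∧ ∀ i ∈ I, (S i).sum = R i} := by
    refine ⟨I, rfl, fun i => {R i}, ?_, fun i _ => Multiset.sum_singleton _⟩
    rw [Multiset.le_iff_count]
    intro v
    rw [Multiset.count_sum']
    have h3 : ∀ i ∈ I, Multiset.count v {R i} = if R i = v then 1 else 0 := by
      intro i _
      rw [Multiset.count_singleton]
      exact if_congr eq_comm rfl rfl
    rw [Finset.sum_congr rfl h3]
    have h4 : (∑ x ∈ I, if R x = v then 1 else 0) = (I.filter (fun i => R i = v)).card := by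
      simp [Finset.sum_boole]
    rw [h4, hfil v, hTcard v]
    exact min_le_right _ _
  have hbdd : BddAbove {m : ℕ | ∃ I : Finset (Fin n), I.card = m ∧
      ∃ S : Fin n → Multiset (Fin k → ZMod 2),
        (∑ i ∈ I, S i) ≤ G ∧ ∀ i ∈ I, (S i).sum = R i} := by
    refine ⟨n, ?_⟩
    rintro m ⟨J, rfl, _⟩
    simpa using Finset.card_le_univ J
  calc ∑ v : Fin k → ZMod 2,
      min ((Finset.univ.filter (fun i => R i = v)).card) (G.count v)
      = I.card := hcard.symm
    _ ≤ Lpar G R := le_csSup hbdd hmem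

lemma identDistrib_ind {Ω : Type*} [MeasureSpace Ω] [IsProbabilityMeasure (ℙ : Measure Ω)]
    (pA pB : Ω → Prop) [dA : DecidablePred pA] [dB : DecidablePred pB]
    (hA : MeasurableSet {ω | pA ω}) (hB : MeasurableSet {ω | pB ω})
    (h : ℙ {ω | pA ω} = ℙ {ω | pB ω}) :
    IdentDistrib (fun ω => if pA ω then (1 : ℝ) else 0)
      (fun ω => if pB ω then (1 : ℝ) else 0) ℙ ℙ := by
  classical
  have mA : Measurable (fun ω => if pA ω then (1 : ℝ) else 0) :=
    Measurable.ite hA measurable_const measurable_const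
  have mB : Measurable (fun ω => if pB ω then (1 : ℝ) else 0) :=
    Measurable.ite hB measurable_const measurable_const
  refine ⟨mA.aemeasurable, mB.aemeasurable, ?_⟩
  ext s hs
  rw [Measure.map_apply mA hs, Measure.map_apply mB hs]
  have hcompl : ℙ {ω | pA ω}ᶜ = ℙ {ω | pB ω}ᶜ := by
    rw [measure_compl hA (measure_ne_top _ _), measure_compl hB (measure_ne_top _ _), h]
  have key : ∀ (q : Ω → Prop) (inst : DecidablePred q),
      (fun ω => @ite _ (q ω) (inst ω) (1 : ℝ) 0) ⁻¹' s
        = (if (1:ℝ) ∈ s then {ω | q ω} else ∅) ∪ (if (0:ℝ) ∈ s then {ω | q ω}ᶜ else ∅) := by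
    intro q inst
    ext ω
    by_cases hω : q ω <;> by_cases h1 : (1:ℝ) ∈ s <;> by_cases h0 : (0:ℝ) ∈ s <;>
      simp [hω, h1, h0]
  rw [key pA dA, key pB dB]
  by_cases h1 : (1:ℝ) ∈ s <;> by_cases h0 : (0:ℝ) ∈ s <;>
    simp only [h1, h0, if_true, if_false, Set.union_empty, Set.empty_union,
      Set.union_compl_self, measure_empty]
  · exact h
  · exact hcompl

lemma indicator_avg_tendsto {Ω : Type*} [MeasureSpace Ω] [IsProbabilityMeasure (ℙ : Measure Ω)]
    {E : Type*} [MeasurableSpace E] (f : ℕ → Ω → E) (hm : ∀ i, Measurable (f i))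
    (hind : Pairwise fun i j => IndepFun (f i) (f j) ℙ)
    (p : E → Prop) [dp : DecidablePred p] (hsm : MeasurableSet {x | p x}) (q : ℝ≥0∞)
    (hq : ∀ i, ℙ {ω | p (f i ω)} = q) :
    ∀ᵐ ω ∂ℙ, Tendsto
      (fun n => (∑ i ∈ Finset.range n, if p (f i ω) then (1:ℝ) else 0) / n)
      atTop (nhds q.toReal) := by
  let X : ℕ → Ω → ℝ := fun i ω => if p (f i ω) then (1:ℝ) else 0
  have hAmeas : ∀ i, MeasurableSet {ω | p (f i ω)} := fun i => (hm i) hsm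
  have hXind : ∀ i, X i = fun ω => Set.indicator {ω | p (f i ω)} 1 ω := by
    intro i; funext ω; simp [X, Set.indicator_apply]
  have hint : Integrable (X 0) ℙ := by
    rw [hXind 0]
    exact (integrable_const (1:ℝ)).indicator (hAmeas 0)
  have hindX : Pairwise (Function.onFun (fun x1 x2 => IndepFun x1 x2 ℙ) X) := by
    intro i j hij
    have hg : Measurable (fun x : E => if p x then (1:ℝ) else 0) :=
      Measurable.ite hsm measurable_const measurable_const
    exact (hind hij).comp hg hg
  have hident : ∀ i, IdentDistrib (X i) (X 0) ℙ ℙ := by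
    intro i
    exact @identDistrib_ind Ω _ _ (fun ω => p (f i ω)) (fun ω => p (f 0 ω))
      (fun ω => dp (f i ω)) (fun ω => dp (f 0 ω))
      (hAmeas i) (hAmeas 0) ((hq i).trans (hq 0).symm)
  have hexp : ∫ ω, X 0 ω ∂ℙ = q.toReal := by
    rw [hXind 0]
    rw [show (fun ω => Set.indicator {ω | p (f 0 ω)} 1 ω)
        = Set.indicator {ω | p (f 0 ω)} 1 from rfl]
    rw [integral_indicator_one (hAmeas 0), measureReal_def, hq 0]
  have := strong_law_ae_real X hint hindX hident
  rw [hexp] at this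
  exact this

lemma count_ofFn {E : Type*} [DecidableEq E] {n : ℕ} (f : Fin n → E) (v : E) :
    Multiset.count v (↑(List.ofFn f) : Multiset E) = ∑ i : Fin n, if f i = v then 1 else 0 := by
  induction n with
  | zero => simp
  | succ n ih =>
      rw [List.ofFn_succ,
        show ((f 0 :: List.ofFn fun i => f i.succ : List E) : Multiset E)
          = (f 0 ::ₘ (↑(List.ofFn fun i => f i.succ) : Multiset E)) from rfl,
        Multiset.count_cons, ih, Fin.sum_univ_succ, add_comm]
      congr 1
      exact if_congr eq_comm rfl rfl

lemma cardFilter_ofFn {E : Type*} {n : ℕ} (p : E → Prop) [DecidablePred p] (f : Fin n → E) :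
    Multiset.card (Multiset.filter p (↑(List.ofFn f) : Multiset E))
      = ∑ i : Fin n, if p (f i) then 1 else 0 := by
  induction n with
  | zero => simp
  | succ n ih =>
      rw [List.ofFn_succ,
        show ((f 0 :: List.ofFn fun i => f i.succ : List E) : Multiset E)
          = (f 0 ::ₘ (↑(List.ofFn fun i => f i.succ) : Multiset E)) from rfl,
        Multiset.filter_cons, Multiset.card_add, ih, Fin.sum_univ_succ]
      congr 1
      by_cases h : p (f 0) <;> simp [h]

lemma natdiv_le {a b : ℕ} (h : a ≤ b) (n : ℕ) : (a:ℝ)/(n:ℝ) ≤ (b:ℝ)/(n:ℝ) := by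
  gcongr

/-- columns i.i.d. uniform on `F_2^k`, requests i.i.d. uniform on
the nonzero vectors, the two processes independent. Then `L_n / n → 1 − 2^{-k}`
almost surely, where `L_n` is the maximum number of the first `n` requests
servable from the first `n` columns by disjoint recovery sets. -/
theorem Lpar_div_n_tendsto (k : ℕ)
    {Ω : Type*} [MeasureSpace Ω] [IsProbabilityMeasure (ℙ : Measure Ω)]
    (C : ℕ → Ω → (Fin k → ZMod 2)) (R : ℕ → Ω → (Fin k → ZMod 2))
    (hmC : ∀ i, Measurable (C i)) (hmR : ∀ i, Measurable (R i))
    (hindep : iIndepFun (Sum.elim C R) ℙ)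
    (hunifC : ∀ i (v : Fin k → ZMod 2), ℙ {ω | C i ω = v} = ((2 : ℝ≥0∞) ^ k)⁻¹)
    (hR0 : ∀ i ω, R i ω ≠ 0)
    (hunifR : ∀ i (v : Fin k → ZMod 2), v ≠ 0 →
      ℙ {ω | R i ω = v} = ((2 : ℝ≥0∞) ^ k - 1)⁻¹) :
    ∀ᵐ ω ∂ℙ, Tendsto
      (fun n : ℕ =>
        (Lpar ((List.ofFn fun i : Fin n => C (i : ℕ) ω : List (Fin k → ZMod 2)) :
            Multiset (Fin k → ZMod 2)) (fun i : Fin n => R (i : ℕ) ω) : ℝ) / n)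
      atTop (nhds (1 - 1 / 2 ^ k)) := by
  classical
  rcases isEmpty_or_nonempty Ω with hΩ | hΩ
  · exact ae_of_all _ (fun ω => (IsEmpty.false ω).elim)
  have hk : 0 < k := by
    rcases Nat.eq_zero_or_pos k with hk0 | hk0
    · subst hk0
      obtain ⟨ω₀⟩ := hΩ
      exact absurd (funext fun i : Fin 0 => i.elim0) (hR0 0 ω₀)
    · exact hk0
  have h2k : (0:ℝ) < 2^k := by positivity
  have h2k1 : (0:ℝ) < 2^k - 1 := by
    have : (1:ℝ) < 2^k := one_lt_pow₀ (by norm_num) (by omega)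
    linarith
  -- pairwise independence
  have hindC : Pairwise (fun i j => IndepFun (C i) (C j) ℙ) := by
    intro i j hij
    exact hindep.indepFun (show (Sum.inl i : ℕ ⊕ ℕ) ≠ Sum.inl j by simpa using hij)
  have hindR : Pairwise (fun i j => IndepFun (R i) (R j) ℙ) := by
    intro i j hij
    exact hindep.indepFun (show (Sum.inr i : ℕ ⊕ ℕ) ≠ Sum.inr j by simpa using hij)
  -- toReal computations
  have tC : (((2:ℝ≥0∞)^k)⁻¹).toReal = ((2:ℝ)^k)⁻¹ := by
    rw [ENNReal.toReal_inv]; norm_num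
  have tR : (((2:ℝ≥0∞)^k - 1)⁻¹).toReal = ((2:ℝ)^k - 1)⁻¹ := by
    rw [ENNReal.toReal_inv, ENNReal.toReal_sub_of_le (one_le_pow_of_one_le' (by norm_num) k)
      (ENNReal.pow_ne_top (by norm_num))]
    norm_num
  have tNZ : ((1:ℝ≥0∞) - ((2:ℝ≥0∞)^k)⁻¹).toReal = 1 - ((2:ℝ)^k)⁻¹ := by
    rw [ENNReal.toReal_sub_of_le (by
        rw [ENNReal.inv_le_one]
        exact one_le_pow_of_one_le' (by norm_num) k) (by norm_num)]
    rw [ENNReal.toReal_one, ENNReal.toReal_inv]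
    norm_num
  -- a.e. limit events
  have hCv : ∀ v : Fin k → ZMod 2, ∀ᵐ ω ∂ℙ, Tendsto
      (fun n => (∑ i ∈ Finset.range n, if C i ω = v then (1:ℝ) else 0) / n)
      atTop (nhds (((2:ℝ)^k)⁻¹)) := by
    intro v
    have := indicator_avg_tendsto C hmC hindC (fun x => x = v)
      (measurableSet_eq) _ (fun i => hunifC i v)
    rwa [tC] at this
  have hRv : ∀ v : Fin k → ZMod 2, ∀ᵐ ω ∂ℙ, v ≠ 0 → Tendsto
      (fun n => (∑ i ∈ Finset.range n, if R i ω = v then (1:ℝ) else 0) / n)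
      atTop (nhds (((2:ℝ)^k - 1)⁻¹)) := by
    intro v
    by_cases hv : v = 0
    · exact ae_of_all _ (fun ω h => absurd hv h)
    · have := indicator_avg_tendsto R hmR hindR (fun x => x = v)
        (measurableSet_eq) _ (fun i => hunifR i v hv)
      rw [tR] at this
      filter_upwards [this] with ω h _
      exact h
  have hNZ : ∀ᵐ ω ∂ℙ, Tendsto
      (fun n => (∑ i ∈ Finset.range n, if C i ω ≠ 0 then (1:ℝ) else 0) / n)
      atTop (nhds (1 - ((2:ℝ)^k)⁻¹)) := by
    have hq : ∀ i, ℙ {ω | C i ω ≠ 0} = 1 - ((2:ℝ≥0∞)^k)⁻¹ := by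
      intro i
      have h1 : {ω | C i ω ≠ 0} = {ω | C i ω = 0}ᶜ := rfl
      have hms : MeasurableSet {ω : Ω | C i ω = 0} := (hmC i) measurableSet_eq
      rw [h1, measure_compl hms (measure_ne_top _ _), measure_univ, hunifC i 0]
    have := indicator_avg_tendsto C hmC hindC (fun x => x ≠ 0)
      ((measurableSet_eq (a := (0 : Fin k → ZMod 2))).compl) _ hq
    rwa [tNZ] at this
  filter_upwards [ae_all_iff.mpr hCv, ae_all_iff.mpr hRv, hNZ] with ω hCω hRω hNZω
  -- pointwise squeeze
  set Gm : (n : ℕ) → Multiset (Fin k → ZMod 2) :=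
    fun n => (↑(List.ofFn fun i : Fin n => C (i:ℕ) ω) : Multiset (Fin k → ZMod 2)) with hGm
  have hcntC : ∀ (v : Fin k → ZMod 2) (n : ℕ),
      ((Multiset.count v (Gm n) : ℝ)) = ∑ i ∈ Finset.range n, (if C i ω = v then (1:ℝ) else 0) := by
    intro v n
    rw [hGm, count_ofFn]
    push_cast
    rw [Fin.sum_univ_eq_sum_range (fun j => if C j ω = v then (1:ℝ) else 0) n]
  have hcntR : ∀ (v : Fin k → ZMod 2) (n : ℕ),
      (((Finset.univ.filter (fun i : Fin n => R (i:ℕ) ω = v)).card : ℝ))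
        = ∑ i ∈ Finset.range n, (if R i ω = v then (1:ℝ) else 0) := by
    intro v n
    rw [Finset.card_filter]
    push_cast
    rw [Fin.sum_univ_eq_sum_range (fun j => if R j ω = v then (1:ℝ) else 0) n]
  have hhi : ∀ n : ℕ,
      ((Multiset.card (Multiset.filter (fun x => x ≠ 0) (Gm n)) : ℝ))
        = ∑ i ∈ Finset.range n, (if C i ω ≠ 0 then (1:ℝ) else 0) := by
    intro n
    rw [hGm, cardFilter_ofFn]
    push_cast
    rw [Fin.sum_univ_eq_sum_range (fun j => if C j ω ≠ 0 then (1:ℝ) else 0) n]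
  -- upper bound limit
  have hup : Tendsto (fun n : ℕ =>
      ((Multiset.card (Multiset.filter (fun x => x ≠ 0) (Gm n)) : ℝ)) / n)
      atTop (nhds (1 - ((2:ℝ)^k)⁻¹)) := by
    have heq : (fun n : ℕ =>
        ((Multiset.card (Multiset.filter (fun x => x ≠ 0) (Gm n)) : ℝ)) / n)
        = fun n : ℕ => (∑ i ∈ Finset.range n, if C i ω ≠ 0 then (1:ℝ) else 0) / n :=
      funext fun n => by rw [hhi n]
    rw [heq]
    exact hNZω
  -- lower bound limit
  set L : (Fin k → ZMod 2) → ℝ := fun v => if v = 0 then 0 else ((2:ℝ)^k)⁻¹ with hL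
  have hsumL : ∑ v : Fin k → ZMod 2, L v = 1 - ((2:ℝ)^k)⁻¹ := by
    have h5 : ∀ v : Fin k → ZMod 2,
        L v = ((2:ℝ)^k)⁻¹ - (if v = 0 then ((2:ℝ)^k)⁻¹ else 0) := by
      intro v; by_cases hv : v = 0 <;> simp [hL, hv]
    rw [Finset.sum_congr rfl (fun v _ => h5 v), Finset.sum_sub_distrib, Finset.sum_const,
      Finset.sum_ite_eq' Finset.univ (0 : Fin k → ZMod 2) (fun _ => ((2:ℝ)^k)⁻¹)]
    simp only [Finset.mem_univ, if_true, Finset.card_univ]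
    have hcard : Fintype.card (Fin k → ZMod 2) = 2^k := by simp
    rw [hcard]
    rw [nsmul_eq_mul]
    push_cast
    field_simp
  have hlo : Tendsto (fun n : ℕ =>
      ((∑ v : Fin k → ZMod 2, min
        ((Finset.univ.filter (fun i : Fin n => R (i:ℕ) ω = v)).card)
        (Multiset.count v (Gm n)) : ℕ) : ℝ) / n)
      atTop (nhds (1 - ((2:ℝ)^k)⁻¹)) := by
    have heq : ∀ n : ℕ, ((∑ v : Fin k → ZMod 2, min
        ((Finset.univ.filter (fun i : Fin n => R (i:ℕ) ω = v)).card)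
        (Multiset.count v (Gm n)) : ℕ) : ℝ) / n
        = ∑ v : Fin k → ZMod 2, min
            ((∑ i ∈ Finset.range n, if R i ω = v then (1:ℝ) else 0) / n)
            ((∑ i ∈ Finset.range n, if C i ω = v then (1:ℝ) else 0) / n) := by
      intro n
      push_cast [Nat.cast_min]
      rw [Finset.sum_div]
      refine Finset.sum_congr rfl (fun v _ => ?_)
      rw [← min_div_div_right (Nat.cast_nonneg n), hcntR v n, hcntC v n]
    rw [funext heq]
    have htodo : ∀ v ∈ (Finset.univ : Finset (Fin k → ZMod 2)), Tendsto (fun n : ℕ =>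
        min ((∑ i ∈ Finset.range n, if R i ω = v then (1:ℝ) else 0) / n)
            ((∑ i ∈ Finset.range n, if C i ω = v then (1:ℝ) else 0) / n))
        atTop (nhds (L v)) := by
      intro v _
      by_cases hv : v = 0
      · have hz : ∀ n : ℕ, (∑ i ∈ Finset.range n, if R i ω = v then (1:ℝ) else 0) = 0 := by
          intro n
          refine Finset.sum_eq_zero (fun i _ => if_neg ?_)
          rw [hv]
          exact hR0 i ω
        have hzz : (fun n : ℕ =>
            min ((∑ i ∈ Finset.range n, if R i ω = v then (1:ℝ) else 0) / n)
              ((∑ i ∈ Finset.range n, if C i ω = v then (1:ℝ) else 0) / n))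
            = fun _ => (0:ℝ) := by
          funext n
          rw [hz n, zero_div]
          refine min_eq_left ?_
          positivity
        rw [hzz]
        have : L v = 0 := by simp [hL, hv]
        rw [this]
        exact tendsto_const_nhds
      · have hmin2 : min (((2:ℝ)^k - 1)⁻¹) (((2:ℝ)^k)⁻¹) = ((2:ℝ)^k)⁻¹ := by
          refine min_eq_right ?_
          rw [inv_le_inv₀ h2k h2k1]
          linarith
        have := ((hRω v) hv).min (hCω v)
        rw [hmin2] at this
        have hLv : L v = ((2:ℝ)^k)⁻¹ := by simp [hL, hv]
        rw [hLv]
        exact this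
    have := tendsto_finset_sum Finset.univ htodo
    rwa [hsumL] at this
  -- final squeeze
  have hgoalval : (1:ℝ) - 1 / 2^k = 1 - ((2:ℝ)^k)⁻¹ := by rw [one_div]
  rw [hgoalval]
  refine tendsto_of_tendsto_of_tendsto_of_le_of_le hlo hup ?_ ?_
  · intro n
    exact natdiv_le (le_Lpar (Gm n) (fun i : Fin n => R (i:ℕ) ω)) n
  · intro n
    exact natdiv_le (Lpar_le_card_filter (Gm n) (fun i : Fin n => R (i:ℕ) ω)
      (fun i => hR0 i ω)) n
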